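/- Let $d$ and $r$ be natural numbers. There exists a natural number $C(d,r)$ such that whenever $1 \to K \to G \to A \to 1$ is a short exact sequence of groups with $|K| \le d$ and $A$ abelian and generated by $r$ elements, then $G$ has an abelian subgroup of index at most $C(d,r)$. -/
import Mathlib

universe u

private lemma aux_pow_comm_one {G : Type*} [Group G] (x y z : G) (h : x * y = y * x * z)
    (hzx : Commute z x) : ∀ a : ℕ, x ^ a * y = y * x ^ a * z ^ a := by
  intro a
  induction a with
  | zero => simp
  | succ a ih =>
      have hzax : Commute (z ^ a) x := hzx.pow_left a
      calc x ^ (a + 1) * y = x ^ a * (x * y) := by rw [pow_succ, mul_assoc]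
        _ = x ^ a * y * (x * z) := by rw [h]; group
        _ = y * x ^ a * z ^ a * (x * z) := by rw [ih]
        _ = y * x ^ a * (z ^ a * x) * z := by group
        _ = y * x ^ a * (x * z ^ a) * z := by rw [hzax.eq]
        _ = y * x ^ (a + 1) * z ^ (a + 1) := by rw [pow_succ, pow_succ]; group

private lemma aux_pow_comm {G : Type*} [Group G] (x y z : G) (h : x * y = y * x * z)
    (hzx : Commute z x) (hzy : Commute z y) (a b : ℕ) :
    x ^ a * y ^ b = y ^ b * x ^ a * z ^ (a * b) := by
  induction b with
  | zero => simp
  | succ b ih =>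
      have h1 := aux_pow_comm_one x y z h hzx a
      have hzaby : Commute (z ^ (a * b)) y := hzy.pow_left _
      calc x ^ a * y ^ (b + 1) = x ^ a * y ^ b * y := by rw [pow_succ, mul_assoc]
        _ = y ^ b * x ^ a * z ^ (a * b) * y := by rw [ih]
        _ = y ^ b * x ^ a * (y * z ^ (a * b)) := by rw [mul_assoc, hzaby.eq]
        _ = y ^ b * (x ^ a * y) * z ^ (a * b) := by group
        _ = y ^ b * (y * x ^ a * z ^ a) * z ^ (a * b) := by rw [h1]
        _ = y ^ (b + 1) * x ^ a * (z ^ a * z ^ (a * b)) := by rw [pow_succ]; group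
        _ = y ^ (b + 1) * x ^ a * z ^ (a * (b + 1)) := by
              rw [← pow_add]; ring_nf

private lemma exists_prod_zpow {H : Type*} [CommGroup H] (S : Finset H) {x : H}
    (hx : x ∈ Subgroup.closure (S : Set H)) : ∃ c : H → ℤ, x = ∏ s ∈ S, s ^ c s := by
  induction hx using Subgroup.closure_induction with
  | mem s hs =>
      classical
      refine ⟨fun t => if t = s then 1 else 0, ?_⟩
      rw [Finset.prod_eq_single_of_mem s (Finset.mem_coe.mp hs)
        (fun t _ ht => by simp [ht])]
      simp
  | one => exact ⟨0, by simp⟩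
  | mul a b _ _ ha hb =>
      obtain ⟨c1, rfl⟩ := ha
      obtain ⟨c2, rfl⟩ := hb
      exact ⟨c1 + c2, by rw [← Finset.prod_mul_distrib]; simp [zpow_add]⟩
  | inv a _ ha =>
      obtain ⟨c, rfl⟩ := ha
      exact ⟨-c, by rw [← Finset.prod_inv_distrib]; simp [zpow_neg]⟩


/-- For all `d`, `r` there is a constant `C(d,r)` such that any group `G` fitting
in a short exact sequence `1 → K → G → A → 1` with `|K| ≤ d` and `A` abelian generated by `r`
elements has an abelian subgroup of index at most `C(d,r)`. -/
theorem stmt_3 (d r : ℕ) :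
    ∃ C : ℕ, ∀ (G : Type u) [Group G] (K : Subgroup G) [K.Normal],
      0 < Nat.card K → Nat.card K ≤ d →
      (∀ x y : G ⧸ K, x * y = y * x) →
      (∃ S : Finset (G ⧸ K), S.card ≤ r ∧ Subgroup.closure (S : Set (G ⧸ K)) = ⊤) →
      ∃ A : Subgroup G, (∀ x ∈ A, ∀ y ∈ A, x * y = y * x) ∧ A.index ≤ C := by
  classical
  refine ⟨(Nat.factorial d * d) ^ r * d, ?_⟩
  rintro G _ K _ hKpos hKd hcomm ⟨S, hSr, hSgen⟩
  haveI finK : Finite K := Nat.finite_of_card_ne_zero hKpos.ne'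
  set e := Nat.card K with he
  set C : Subgroup G := (MulAut.conjNormal (H := K) : G →* MulAut K).ker with hCdef
  -- centralizer property
  have hC : ∀ x ∈ C, ∀ k ∈ K, x * k = k * x := by
    intro x hx k hk
    have h1 : (MulAut.conjNormal x : MulAut K) ⟨k, hk⟩ = ⟨k, hk⟩ := by
      rw [MonoidHom.mem_ker.mp hx]; rfl
    have h2 : x * k * x⁻¹ = k := congrArg Subtype.val h1
    calc x * k = x * k * x⁻¹ * x := by group
      _ = k * x := by rw [h2]
  haveI finAut : Finite (MulAut K) :=
    Finite.of_injective MulEquiv.toEquiv MulEquiv.toEquiv_injective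
  haveI finQ : Finite (G ⧸ C) :=
    Finite.of_equiv _ (QuotientGroup.quotientKerEquivRange _).toEquiv.symm
  set n := C.index with hn
  have hnd : n ≤ Nat.factorial d := by
    have h1 : n = Nat.card (MonoidHom.range (MulAut.conjNormal (H := K) : G →* MulAut K)) := by
      rw [hn, Subgroup.index_eq_card,
        Nat.card_congr (QuotientGroup.quotientKerEquivRange _).toEquiv]
    have h2 : Nat.card (MonoidHom.range (MulAut.conjNormal (H := K) : G →* MulAut K))
        ≤ Nat.card (MulAut K) :=
      Nat.card_le_card_of_injective Subtype.val Subtype.val_injective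
    have h3 : Nat.card (MulAut K) ≤ Nat.card (Equiv.Perm K) :=
      Nat.card_le_card_of_injective MulEquiv.toEquiv MulEquiv.toEquiv_injective
    have h4 : Nat.card (Equiv.Perm K) = Nat.factorial e := by
      haveI := Fintype.ofFinite K
      rw [Nat.card_eq_fintype_card, Fintype.card_perm, he, Nat.card_eq_fintype_card]
    have h5 : Nat.factorial e ≤ Nat.factorial d := Nat.factorial_le hKd
    omega
  have hn0 : 0 < n := by
    rw [hn, Subgroup.index_eq_card]; exact Nat.card_pos
  set m := n * e with hm
  have hm0 : 0 < m := Nat.mul_pos hn0 hKpos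
  have hpowC : ∀ x : G, x ^ n ∈ C := fun x => Subgroup.pow_index_mem C x
  -- commuting e-th powers inside C
  have hcommE : ∀ x y : G, x ∈ C → y ∈ C → x ^ e * y ^ e = y ^ e * x ^ e := by
    intro x y hx hy
    set z := x⁻¹ * y⁻¹ * x * y with hz
    have hzK : z ∈ K := by
      have h1 : ((y * x : G) : G ⧸ K) = ((x * y : G) : G ⧸ K) := by
        rw [QuotientGroup.mk_mul, QuotientGroup.mk_mul, hcomm]
      have h2 := QuotientGroup.eq.mp h1
      have h3 : (y * x)⁻¹ * (x * y) = z := by rw [hz]; group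
      rwa [h3] at h2
    have h : x * y = y * x * z := by rw [hz]; group
    have hzx : Commute z x := (Commute.symm (hC x hx z hzK : Commute x z))
    have hzy : Commute z y := (Commute.symm (hC y hy z hzK : Commute y z))
    have hze : z ^ e = 1 := by
      have h1 : (⟨z, hzK⟩ : K) ^ e = 1 := pow_card_eq_one'
      have h2 := congrArg Subtype.val h1
      simpa using h2
    have key := aux_pow_comm x y z h hzx hzy e e
    rw [key, show e * e = e * e from rfl, pow_mul, hze, one_pow, mul_one]
  -- the abelian subgroup
  set A : Subgroup G :=
    Subgroup.closure ((fun s : G ⧸ K => (Quotient.out s) ^ m) '' (S : Set (G ⧸ K))) with hA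
  have hgen_comm : ∀ t ∈ ((fun s : G ⧸ K => (Quotient.out s) ^ m) '' (S : Set (G ⧸ K))),
      ∀ t' ∈ ((fun s : G ⧸ K => (Quotient.out s) ^ m) '' (S : Set (G ⧸ K))), t * t' = t' * t := by
    rintro _ ⟨s, _, rfl⟩ _ ⟨s', _, rfl⟩
    dsimp only
    rw [hm, pow_mul, pow_mul]
    exact hcommE _ _ (hpowC _) (hpowC _)
  have hAcomm : ∀ x ∈ A, ∀ y ∈ A, x * y = y * x := by
    intro x hx y hy
    rw [hA] at hx hy
    refine Subgroup.closure_induction₂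
      (p := fun a b _ _ => Commute a b)
      (fun a b ha hb => hgen_comm a ha b hb)
      (fun a _ => Commute.one_left a) (fun a _ => Commute.one_right a)
      (fun a b c _ _ _ h1 h2 => h1.mul_left h2)
      (fun a b c _ _ _ h1 h2 => h1.mul_right h2)
      (fun a b _ _ h1 => h1.inv_left)
      (fun a b _ _ h1 => h1.inv_right) hx hy
  refine ⟨A, hAcomm, ?_⟩
  -- index bound via explicit surjection
  letI commQ : CommGroup (G ⧸ K) :=
    { (inferInstance : Group (G ⧸ K)) with mul_comm := hcomm }
  set F : (({s // s ∈ S} → Fin m) × K) → G ⧸ A := fun p =>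
    QuotientGroup.mk
      ((S.attach.toList.map (fun s => (Quotient.out s.1) ^ ((p.1 s : ℕ)))).prod * (p.2 : G))
    with hF
  have hsurj : Function.Surjective F := by
    intro q
    obtain ⟨g, rfl⟩ := QuotientGroup.mk_surjective q
    have hgmem : (g : G ⧸ K) ∈ Subgroup.closure (S : Set (G ⧸ K)) := by
      rw [hSgen]; exact Subgroup.mem_top _
    obtain ⟨c, hc⟩ := exists_prod_zpow S hgmem
    set b : G ⧸ K → ℕ := fun s => ((c s) % (m : ℤ)).toNat with hb
    have hmZ : (0 : ℤ) < (m : ℤ) := by exact_mod_cast hm0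
    have hblt : ∀ s, b s < m := by
      intro s
      have h1 := Int.emod_lt_of_pos (c s) hmZ
      have h2 := Int.emod_nonneg (c s) hmZ.ne'
      simp only [hb]
      omega
    set qq : G ⧸ K → ℤ := fun s => c s / (m : ℤ) with hqq
    have hbq : ∀ s, (b s : ℤ) + (m : ℤ) * qq s = c s := by
      intro s
      have h2 := Int.emod_nonneg (c s) hmZ.ne'
      simp only [hb, hqq, Int.toNat_of_nonneg h2]
      exact Int.emod_add_mul_ediv (c s) (m : ℤ)
    set u : G := (S.attach.toList.map (fun s => (Quotient.out s.1) ^ (b s.1))).prod with hu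
    set v : G := (S.attach.toList.map (fun s => ((Quotient.out s.1) ^ m) ^ (qq s.1))).prod
      with hv
    have hvA : v ∈ A := by
      rw [hv]
      refine Subgroup.list_prod_mem A ?_
      intro x hx
      obtain ⟨s, _, rfl⟩ := List.mem_map.mp hx
      exact Subgroup.zpow_mem A
        (Subgroup.subset_closure ⟨s.1, Finset.mem_coe.mpr s.2, rfl⟩) _
    have hmku : (QuotientGroup.mk' K) u = ∏ s ∈ S.attach, (s.1 : G ⧸ K) ^ (b s.1) := by
      rw [hu, map_list_prod, List.map_map,
        show ((QuotientGroup.mk' K) ∘ fun s : {x // x ∈ S} => (Quotient.out s.1) ^ (b s.1))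
          = fun s : {x // x ∈ S} => (s.1 : G ⧸ K) ^ (b s.1) from funext fun s => by
            simp [QuotientGroup.out_eq']]
      exact Finset.prod_map_toList _ _
    have hmkv : (QuotientGroup.mk' K) v
        = ∏ s ∈ S.attach, (s.1 : G ⧸ K) ^ ((m : ℤ) * qq s.1) := by
      rw [hv, map_list_prod, List.map_map,
        show ((QuotientGroup.mk' K) ∘ fun s : {x // x ∈ S} => ((Quotient.out s.1) ^ m) ^ (qq s.1))
          = fun s : {x // x ∈ S} => (s.1 : G ⧸ K) ^ ((m : ℤ) * qq s.1) from funext fun s => by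
            rw [Function.comp_apply, map_zpow, map_pow, QuotientGroup.mk'_apply,
              QuotientGroup.out_eq', ← zpow_natCast (s.1 : G ⧸ K) m, ← zpow_mul]]
      exact Finset.prod_map_toList _ _
    have hmk : ((u * v : G) : G ⧸ K) = (g : G ⧸ K) := by
      have h0 : ((u * v : G) : G ⧸ K) = (QuotientGroup.mk' K) (u * v) := rfl
      rw [h0, map_mul, hmku, hmkv, ← Finset.prod_mul_distrib, hc,
        ← Finset.prod_attach S (fun s => s ^ c s)]
      refine Finset.prod_congr rfl fun s _ => ?_
      rw [← zpow_natCast (s.1 : G ⧸ K) (b s.1), ← zpow_add, hbq s.1]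
    have hw : (u * v)⁻¹ * g ∈ K := QuotientGroup.eq.mp hmk
    set k0 : G := v * ((u * v)⁻¹ * g) * v⁻¹ with hk0def
    have hk0 : k0 ∈ K := Subgroup.Normal.conj_mem ‹K.Normal› _ hw v
    have hg : g = u * k0 * v := by rw [hk0def]; group
    refine ⟨⟨fun s => ⟨b s.1, hblt s.1⟩, ⟨k0, hk0⟩⟩, ?_⟩
    have hFval : F ⟨fun s => ⟨b s.1, hblt s.1⟩, ⟨k0, hk0⟩⟩ = QuotientGroup.mk (u * k0) := rfl
    rw [hFval]
    refine QuotientGroup.eq.mpr ?_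
    have h3 : (u * k0)⁻¹ * g = v := by rw [hg]; group
    rw [h3]; exact hvA
  have hcard1 : Nat.card (G ⧸ A) ≤ Nat.card (({s // s ∈ S} → Fin m) × K) :=
    Nat.card_le_card_of_surjective F hsurj
  have hcard2 : Nat.card (({s // s ∈ S} → Fin m) × K) = m ^ S.card * e := by
    rw [Nat.card_prod, ← he]
    congr 1
    rw [Nat.card_eq_fintype_card, Fintype.card_fun, Fintype.card_fin, Fintype.card_coe]
  have hfin : A.index = Nat.card (G ⧸ A) := Subgroup.index_eq_card A
  have hmle : m ≤ Nat.factorial d * d := Nat.mul_le_mul hnd hKd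
  have h1 : m ^ S.card ≤ m ^ r := Nat.pow_le_pow_right hm0 hSr
  have h2 : m ^ r ≤ (Nat.factorial d * d) ^ r := Nat.pow_le_pow_left hmle r
  calc A.index = Nat.card (G ⧸ A) := hfin
    _ ≤ m ^ S.card * e := by rw [← hcard2]; exact hcard1
    _ ≤ (Nat.factorial d * d) ^ r * d :=
        Nat.mul_le_mul (le_trans h1 h2) hKd
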